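/- On the domain D = {(x¹,x²,y¹,y²) ∈ ℝ⁴ : x¹ + x² ≠ 0, y¹ + y² ≠ 0, x² ≠ y¹}, consider the web function f¹ = (x¹ + y¹)/(x¹ + x²), f² = (x² + y²)/(y¹ + y²), and set σ = (x¹ + x²)/(x² − y¹), τ = (y¹ + y²)/(x² − y¹). Then the Jacobian matrices f̄ and f̃ are invertible on D, the connection coefficients are Γ¹₁₁ = σ, Γ¹₂₁ = τ, Γ²₂₁ = −σ, Γ²₂₂ = −τ, Γ¹₁₂ = Γ¹₂₂ = Γ²₁₁ = Γ²₁₂ = 0, and the curvature tensor vanishes identically: b^i_{jkl} = 0 for all i,j,k,l (so the web is a group web). -/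

import Mathlib

noncomputable section

/-- Points of ℝ⁴ with coordinates (x¹, x², y¹, y²). -/
abbrev Pt : Type := ℝ × ℝ × ℝ × ℝ

/-- Partial derivative with respect to x^j (j = 0 ↦ x¹, j = 1 ↦ x²). -/
def pdx (j : Fin 2) (F : Pt → ℝ) (p : Pt) : ℝ :=
  if j = 0 then deriv (fun t => F (t, p.2.1, p.2.2.1, p.2.2.2)) p.1
  else deriv (fun t => F (p.1, t, p.2.2.1, p.2.2.2)) p.2.1

/-- Partial derivative with respect to y^k (k = 0 ↦ y¹, k = 1 ↦ y²). -/
def pdy (k : Fin 2) (F : Pt → ℝ) (p : Pt) : ℝ :=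
  if k = 0 then deriv (fun t => F (p.1, p.2.1, t, p.2.2.2)) p.2.2.1
  else deriv (fun t => F (p.1, p.2.1, p.2.2.1, t)) p.2.2.2

/-- Jacobian matrix f̄ with entries f̄^i_j = ∂f^i/∂x^j. -/
def fbar (f : Fin 2 → Pt → ℝ) (p : Pt) : Matrix (Fin 2) (Fin 2) ℝ :=
  Matrix.of fun i j => pdx j (f i) p

/-- Jacobian matrix f̃ with entries f̃^i_k = ∂f^i/∂y^k. -/
def ftil (f : Fin 2 → Pt → ℝ) (p : Pt) : Matrix (Fin 2) (Fin 2) ℝ :=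
  Matrix.of fun i k => pdy k (f i) p

/-- Connection coefficients Γ^i_{jk} = −Σ_{l,m} (∂²f^i/∂x^l∂y^m) ḡ^l_j g̃^m_k,
where ḡ = f̄⁻¹ and g̃ = f̃⁻¹. -/
def Gam (f : Fin 2 → Pt → ℝ) (i j k : Fin 2) (p : Pt) : ℝ :=
  - ∑ l : Fin 2, ∑ m : Fin 2,
      pdy m (pdx l (f i)) p * (fbar f p)⁻¹ l j * (ftil f p)⁻¹ m k

/-- Torsion tensor a^i_{jk} = (Γ^i_{jk} − Γ^i_{kj})/2. -/
def tors (f : Fin 2 → Pt → ℝ) (i j k : Fin 2) (p : Pt) : ℝ :=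
  (Gam f i j k p - Gam f i k j p) / 2

/-- Curvature tensor b^i_{jkl}. -/
def curv (f : Fin 2 → Pt → ℝ) (i j k l : Fin 2) (p : Pt) : ℝ :=
  (1/2) * ∑ m : Fin 2,
    ( pdx m (Gam f i k l) p * (fbar f p)⁻¹ m j
    + pdx m (Gam f i j l) p * (fbar f p)⁻¹ m k
    - pdy m (Gam f i k j) p * (ftil f p)⁻¹ m l
    - pdy m (Gam f i k l) p * (ftil f p)⁻¹ m j
    + Gam f m j l p * Gam f i k m p
    - Gam f m k j p * Gam f i m l p
    + 2 * Gam f m k l p * tors f i m j p )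

/-- The web function: f¹ = (x¹ + y¹)/(x¹ + x²), f² = (x² + y²)/(y¹ + y²). -/
def w : Fin 2 → Pt → ℝ :=
  ![fun p => (p.1 + p.2.2.1) / (p.1 + p.2.1), fun p => (p.2.1 + p.2.2.2) / (p.2.2.1 + p.2.2.2)]

-- Stage 1: first partials of w
lemma pdx_w00 {x1 x2 y1 y2 : ℝ} (h1 : x1 + x2 ≠ 0) :
    pdx 0 (w 0) (x1, x2, y1, y2) = (x2 - y1) / (x1 + x2)^2 := by
  have hd : HasDerivAt (fun t : ℝ => (t + y1) / (t + x2))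
      ((1 * (x1 + x2) - (x1 + y1) * 1) / (x1 + x2)^2) x1 :=
    (((hasDerivAt_id x1).add_const y1).div ((hasDerivAt_id x1).add_const x2) h1)
  rw [show pdx 0 (w 0) (x1, x2, y1, y2) = deriv (fun t : ℝ => (t + y1) / (t + x2)) x1 from rfl,
    hd.deriv]
  field_simp
  ring

lemma pdx_w01 {x1 x2 y1 y2 : ℝ} (h1 : x1 + x2 ≠ 0) :
    pdx 1 (w 0) (x1, x2, y1, y2) = -((x1 + y1) / (x1 + x2)^2) := by
  have hd : HasDerivAt (fun t : ℝ => (x1 + y1) / (x1 + t))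
      ((0 * (x1 + x2) - (x1 + y1) * 1) / (x1 + x2)^2) x2 :=
    ((hasDerivAt_const x2 (x1 + y1)).div ((hasDerivAt_id x2).const_add x1) h1)
  rw [show pdx 1 (w 0) (x1, x2, y1, y2) = deriv (fun t : ℝ => (x1 + y1) / (x1 + t)) x2 from rfl,
    hd.deriv]
  field_simp
  ring

lemma pdx_w10 (x1 x2 y1 y2 : ℝ) :
    pdx 0 (w 1) (x1, x2, y1, y2) = 0 := by
  rw [show pdx 0 (w 1) (x1, x2, y1, y2)
      = deriv (fun _ : ℝ => (x2 + y2) / (y1 + y2)) x1 from rfl, deriv_const]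

lemma pdx_w11 {x1 x2 y1 y2 : ℝ} (h2 : y1 + y2 ≠ 0) :
    pdx 1 (w 1) (x1, x2, y1, y2) = 1 / (y1 + y2) := by
  have hd : HasDerivAt (fun t : ℝ => (t + y2) / (y1 + y2)) (1 / (y1 + y2)) x2 :=
    ((hasDerivAt_id x2).add_const y2).div_const (y1 + y2)
  rw [show pdx 1 (w 1) (x1, x2, y1, y2) = deriv (fun t : ℝ => (t + y2) / (y1 + y2)) x2 from rfl,
    hd.deriv]

lemma pdy_w00 {x1 x2 y1 y2 : ℝ} (h1 : x1 + x2 ≠ 0) :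
    pdy 0 (w 0) (x1, x2, y1, y2) = 1 / (x1 + x2) := by
  have hd : HasDerivAt (fun t : ℝ => (x1 + t) / (x1 + x2)) (1 / (x1 + x2)) y1 :=
    ((hasDerivAt_id y1).const_add x1).div_const (x1 + x2)
  rw [show pdy 0 (w 0) (x1, x2, y1, y2) = deriv (fun t : ℝ => (x1 + t) / (x1 + x2)) y1 from rfl,
    hd.deriv]

lemma pdy_w01 (x1 x2 y1 y2 : ℝ) :
    pdy 1 (w 0) (x1, x2, y1, y2) = 0 := by
  rw [show pdy 1 (w 0) (x1, x2, y1, y2)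
      = deriv (fun _ : ℝ => (x1 + y1) / (x1 + x2)) y2 from rfl, deriv_const]

lemma pdy_w10 {x1 x2 y1 y2 : ℝ} (h2 : y1 + y2 ≠ 0) :
    pdy 0 (w 1) (x1, x2, y1, y2) = -((x2 + y2) / (y1 + y2)^2) := by
  have hd : HasDerivAt (fun t : ℝ => (x2 + y2) / (t + y2))
      ((0 * (y1 + y2) - (x2 + y2) * 1) / (y1 + y2)^2) y1 :=
    ((hasDerivAt_const y1 (x2 + y2)).div ((hasDerivAt_id y1).add_const y2) h2)
  rw [show pdy 0 (w 1) (x1, x2, y1, y2) = deriv (fun t : ℝ => (x2 + y2) / (t + y2)) y1 from rfl,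
    hd.deriv]
  field_simp
  ring

lemma pdy_w11 {x1 x2 y1 y2 : ℝ} (h2 : y1 + y2 ≠ 0) :
    pdy 1 (w 1) (x1, x2, y1, y2) = (y1 - x2) / (y1 + y2)^2 := by
  have hd : HasDerivAt (fun t : ℝ => (x2 + t) / (y1 + t))
      ((1 * (y1 + y2) - (x2 + y2) * 1) / (y1 + y2)^2) y2 :=
    (((hasDerivAt_id y2).const_add x2).div ((hasDerivAt_id y2).const_add y1) h2)
  rw [show pdy 1 (w 1) (x1, x2, y1, y2) = deriv (fun t : ℝ => (x2 + t) / (y1 + t)) y2 from rfl,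
    hd.deriv]
  field_simp
  ring


-- Stage 2: mixed second partials of w
lemma pdyx_000 {x1 x2 y1 y2 : ℝ} (h1 : x1 + x2 ≠ 0) :
    pdy 0 (pdx 0 (w 0)) (x1, x2, y1, y2) = -(1 / (x1 + x2)^2) := by
  rw [show pdy 0 (pdx 0 (w 0)) (x1, x2, y1, y2)
      = deriv (fun t => pdx 0 (w 0) (x1, x2, t, y2)) y1 from rfl,
    funext (fun t => pdx_w00 (y1 := t) (y2 := y2) h1)]
  have hd : HasDerivAt (fun t : ℝ => (x2 - t) / (x1 + x2)^2) (-1 / (x1 + x2)^2) y1 :=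
    ((hasDerivAt_id y1).const_sub x2).div_const ((x1 + x2)^2)
  rw [hd.deriv]
  ring

lemma pdyx_001 {x1 x2 y1 y2 : ℝ} (h1 : x1 + x2 ≠ 0) :
    pdy 1 (pdx 0 (w 0)) (x1, x2, y1, y2) = 0 := by
  rw [show pdy 1 (pdx 0 (w 0)) (x1, x2, y1, y2)
      = deriv (fun t => pdx 0 (w 0) (x1, x2, y1, t)) y2 from rfl,
    funext (fun t => pdx_w00 (y1 := y1) (y2 := t) h1), deriv_const]

lemma pdyx_010 {x1 x2 y1 y2 : ℝ} (h1 : x1 + x2 ≠ 0) :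
    pdy 0 (pdx 1 (w 0)) (x1, x2, y1, y2) = -(1 / (x1 + x2)^2) := by
  rw [show pdy 0 (pdx 1 (w 0)) (x1, x2, y1, y2)
      = deriv (fun t => pdx 1 (w 0) (x1, x2, t, y2)) y1 from rfl,
    funext (fun t => pdx_w01 (y1 := t) (y2 := y2) h1)]
  have hd : HasDerivAt (fun t : ℝ => -((x1 + t) / (x1 + x2)^2)) (-(1 / (x1 + x2)^2)) y1 :=
    (((hasDerivAt_id y1).const_add x1).div_const ((x1 + x2)^2)).neg
  rw [hd.deriv]

lemma pdyx_011 {x1 x2 y1 y2 : ℝ} (h1 : x1 + x2 ≠ 0) :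
    pdy 1 (pdx 1 (w 0)) (x1, x2, y1, y2) = 0 := by
  rw [show pdy 1 (pdx 1 (w 0)) (x1, x2, y1, y2)
      = deriv (fun t => pdx 1 (w 0) (x1, x2, y1, t)) y2 from rfl,
    funext (fun t => pdx_w01 (y1 := y1) (y2 := t) h1), deriv_const]

lemma pdyx_100 (x1 x2 y1 y2 : ℝ) :
    pdy 0 (pdx 0 (w 1)) (x1, x2, y1, y2) = 0 := by
  rw [show pdy 0 (pdx 0 (w 1)) (x1, x2, y1, y2)
      = deriv (fun t => pdx 0 (w 1) (x1, x2, t, y2)) y1 from rfl,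
    funext (fun t => pdx_w10 x1 x2 t y2), deriv_const]

lemma pdyx_101 (x1 x2 y1 y2 : ℝ) :
    pdy 1 (pdx 0 (w 1)) (x1, x2, y1, y2) = 0 := by
  rw [show pdy 1 (pdx 0 (w 1)) (x1, x2, y1, y2)
      = deriv (fun t => pdx 0 (w 1) (x1, x2, y1, t)) y2 from rfl,
    funext (fun t => pdx_w10 x1 x2 y1 t), deriv_const]

lemma pdyx_110 {x1 x2 y1 y2 : ℝ} (h2 : y1 + y2 ≠ 0) :
    pdy 0 (pdx 1 (w 1)) (x1, x2, y1, y2) = -(1 / (y1 + y2)^2) := by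
  rw [show pdy 0 (pdx 1 (w 1)) (x1, x2, y1, y2)
      = deriv (fun t => pdx 1 (w 1) (x1, x2, t, y2)) y1 from rfl]
  have hev : (fun t => pdx 1 (w 1) (x1, x2, t, y2)) =ᶠ[nhds y1] fun t => 1 / (t + y2) := by
    filter_upwards [((continuous_id.add continuous_const).continuousAt).eventually_ne h2] with t ht
    exact pdx_w11 ht
  rw [hev.deriv_eq]
  have hd : HasDerivAt (fun t : ℝ => 1 / (t + y2))
      ((0 * (y1 + y2) - 1 * 1) / (y1 + y2)^2) y1 :=
    ((hasDerivAt_const y1 (1:ℝ)).div ((hasDerivAt_id y1).add_const y2) h2)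
  rw [hd.deriv]
  ring

lemma pdyx_111 {x1 x2 y1 y2 : ℝ} (h2 : y1 + y2 ≠ 0) :
    pdy 1 (pdx 1 (w 1)) (x1, x2, y1, y2) = -(1 / (y1 + y2)^2) := by
  rw [show pdy 1 (pdx 1 (w 1)) (x1, x2, y1, y2)
      = deriv (fun t => pdx 1 (w 1) (x1, x2, y1, t)) y2 from rfl]
  have hev : (fun t => pdx 1 (w 1) (x1, x2, y1, t)) =ᶠ[nhds y2] fun t => 1 / (y1 + t) := by
    filter_upwards [((continuous_const.add continuous_id).continuousAt).eventually_ne h2] with t ht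
    exact pdx_w11 ht
  rw [hev.deriv_eq]
  have hd : HasDerivAt (fun t : ℝ => 1 / (y1 + t))
      ((0 * (y1 + y2) - 1 * 1) / (y1 + y2)^2) y2 :=
    ((hasDerivAt_const y2 (1:ℝ)).div ((hasDerivAt_id y2).const_add y1) h2)
  rw [hd.deriv]
  ring



-- Stage 3: Jacobian matrices and their inverses
lemma fbar_w {x1 x2 y1 y2 : ℝ} (h1 : x1 + x2 ≠ 0) (h2 : y1 + y2 ≠ 0) :
    fbar w (x1, x2, y1, y2)
      = !![(x2 - y1) / (x1 + x2)^2, -((x1 + y1) / (x1 + x2)^2); 0, 1 / (y1 + y2)] := by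
  ext i j
  fin_cases i <;> fin_cases j <;>
    simp [fbar, pdx_w00 h1, pdx_w01 h1, pdx_w10, pdx_w11 h2]

lemma ftil_w {x1 x2 y1 y2 : ℝ} (h1 : x1 + x2 ≠ 0) (h2 : y1 + y2 ≠ 0) :
    ftil w (x1, x2, y1, y2)
      = !![1 / (x1 + x2), 0; -((x2 + y2) / (y1 + y2)^2), (y1 - x2) / (y1 + y2)^2] := by
  ext i j
  fin_cases i <;> fin_cases j <;>
    simp [ftil, pdy_w00 h1, pdy_w01, pdy_w10 h2, pdy_w11 h2]

lemma fbar_w_inv {x1 x2 y1 y2 : ℝ} (h1 : x1 + x2 ≠ 0) (h2 : y1 + y2 ≠ 0) (h3 : x2 ≠ y1) :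
    (fbar w (x1, x2, y1, y2))⁻¹
      = !![(x1 + x2)^2 / (x2 - y1), (x1 + y1) * (y1 + y2) / (x2 - y1); 0, y1 + y2] := by
  have hxy : x2 - y1 ≠ 0 := sub_ne_zero.mpr h3
  rw [fbar_w h1 h2]
  apply Matrix.inv_eq_right_inv
  ext i j
  fin_cases i <;> fin_cases j <;>
    · simp [Matrix.mul_apply, Fin.sum_univ_two, Matrix.one_apply]
      try field_simp
      try ring

lemma ftil_w_inv {x1 x2 y1 y2 : ℝ} (h1 : x1 + x2 ≠ 0) (h2 : y1 + y2 ≠ 0) (h3 : x2 ≠ y1) :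
    (ftil w (x1, x2, y1, y2))⁻¹
      = !![x1 + x2, 0; (x1 + x2) * (x2 + y2) / (y1 - x2), (y1 + y2)^2 / (y1 - x2)] := by
  have hyx : y1 - x2 ≠ 0 := sub_ne_zero.mpr (Ne.symm h3)
  rw [ftil_w h1 h2]
  apply Matrix.inv_eq_right_inv
  ext i j
  fin_cases i <;> fin_cases j <;>
    · simp [Matrix.mul_apply, Fin.sum_univ_two, Matrix.one_apply]
      try field_simp
      try ring

lemma fbar_w_unit {x1 x2 y1 y2 : ℝ} (h1 : x1 + x2 ≠ 0) (h2 : y1 + y2 ≠ 0) (h3 : x2 ≠ y1) :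
    IsUnit (fbar w (x1, x2, y1, y2)) := by
  have hxy : x2 - y1 ≠ 0 := sub_ne_zero.mpr h3
  rw [Matrix.isUnit_iff_isUnit_det, isUnit_iff_ne_zero, fbar_w h1 h2, Matrix.det_fin_two_of]
  field_simp
  simp only [mul_zero, zero_mul, neg_zero, sub_zero]
  exact div_ne_zero hxy (mul_ne_zero (pow_ne_zero 2 h1) h2)

lemma ftil_w_unit {x1 x2 y1 y2 : ℝ} (h1 : x1 + x2 ≠ 0) (h2 : y1 + y2 ≠ 0) (h3 : x2 ≠ y1) :
    IsUnit (ftil w (x1, x2, y1, y2)) := by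
  have hyx : y1 - x2 ≠ 0 := sub_ne_zero.mpr (Ne.symm h3)
  rw [Matrix.isUnit_iff_isUnit_det, isUnit_iff_ne_zero, ftil_w h1 h2, Matrix.det_fin_two_of]
  field_simp
  simp only [mul_zero, zero_mul, neg_zero, sub_zero]
  exact div_ne_zero hyx (mul_ne_zero h1 (pow_ne_zero 2 h2))



def sg (p : Pt) : ℝ := (p.1 + p.2.1) / (p.2.1 - p.2.2.1)
def tu (p : Pt) : ℝ := (p.2.2.1 + p.2.2.2) / (p.2.1 - p.2.2.1)

def G : Fin 2 → Fin 2 → Fin 2 → Pt → ℝ :=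
  ![![![sg, fun _ => 0], ![tu, fun _ => 0]],
    ![![fun _ => 0, fun _ => 0], ![fun p => -sg p, fun p => -tu p]]]

set_option maxHeartbeats 1000000 in
lemma Gam_eq {x1 x2 y1 y2 : ℝ} (h1 : x1 + x2 ≠ 0) (h2 : y1 + y2 ≠ 0) (h3 : x2 ≠ y1)
    (i j k : Fin 2) :
    Gam w i j k (x1, x2, y1, y2) = G i j k (x1, x2, y1, y2) := by
  have hxy : x2 - y1 ≠ 0 := sub_ne_zero.mpr h3
  have hyx : y1 - x2 ≠ 0 := sub_ne_zero.mpr (Ne.symm h3)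
  fin_cases i <;> fin_cases j <;> fin_cases k <;>
    · simp only [Fin.zero_eta, Fin.mk_one]
      simp only [Gam, Fin.sum_univ_two, fbar_w_inv h1 h2 h3, ftil_w_inv h1 h2 h3,
        pdyx_000 h1, pdyx_001 h1, pdyx_010 h1, pdyx_011 h1,
        pdyx_100, pdyx_101, pdyx_110 h2, pdyx_111 h2]
      simp [G, sg, tu]
      try field_simp
      try ring

-- Stage 5a: partial derivatives of sg, tu
lemma pdx_sg_0 (x1 x2 y1 y2 : ℝ) :
    pdx 0 sg (x1, x2, y1, y2) = 1 / (x2 - y1) := by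
  have hd : HasDerivAt (fun t : ℝ => (t + x2) / (x2 - y1)) (1 / (x2 - y1)) x1 :=
    ((hasDerivAt_id x1).add_const x2).div_const (x2 - y1)
  rw [show pdx 0 sg (x1, x2, y1, y2) = deriv (fun t : ℝ => (t + x2) / (x2 - y1)) x1 from rfl,
    hd.deriv]

lemma pdx_sg_1 {x1 x2 y1 y2 : ℝ} (hxy : x2 - y1 ≠ 0) :
    pdx 1 sg (x1, x2, y1, y2) = -((x1 + y1) / (x2 - y1)^2) := by
  have hd : HasDerivAt (fun t : ℝ => (x1 + t) / (t - y1))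
      ((1 * (x2 - y1) - (x1 + x2) * 1) / (x2 - y1)^2) x2 :=
    (((hasDerivAt_id x2).const_add x1).div ((hasDerivAt_id x2).sub_const y1) hxy)
  rw [show pdx 1 sg (x1, x2, y1, y2) = deriv (fun t : ℝ => (x1 + t) / (t - y1)) x2 from rfl,
    hd.deriv]
  field_simp
  ring

lemma pdy_sg_0 {x1 x2 y1 y2 : ℝ} (hxy : x2 - y1 ≠ 0) :
    pdy 0 sg (x1, x2, y1, y2) = (x1 + x2) / (x2 - y1)^2 := by
  have hd : HasDerivAt (fun t : ℝ => (x1 + x2) / (x2 - t))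
      ((0 * (x2 - y1) - (x1 + x2) * (-1)) / (x2 - y1)^2) y1 :=
    ((hasDerivAt_const y1 (x1 + x2)).div ((hasDerivAt_id y1).const_sub x2) hxy)
  rw [show pdy 0 sg (x1, x2, y1, y2) = deriv (fun t : ℝ => (x1 + x2) / (x2 - t)) y1 from rfl,
    hd.deriv]
  ring

lemma pdy_sg_1 (x1 x2 y1 y2 : ℝ) :
    pdy 1 sg (x1, x2, y1, y2) = 0 := by
  rw [show pdy 1 sg (x1, x2, y1, y2)
      = deriv (fun _ : ℝ => (x1 + x2) / (x2 - y1)) y2 from rfl, deriv_const]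

lemma pdx_tu_0 (x1 x2 y1 y2 : ℝ) :
    pdx 0 tu (x1, x2, y1, y2) = 0 := by
  rw [show pdx 0 tu (x1, x2, y1, y2)
      = deriv (fun _ : ℝ => (y1 + y2) / (x2 - y1)) x1 from rfl, deriv_const]

lemma pdx_tu_1 {x1 x2 y1 y2 : ℝ} (hxy : x2 - y1 ≠ 0) :
    pdx 1 tu (x1, x2, y1, y2) = -((y1 + y2) / (x2 - y1)^2) := by
  have hd : HasDerivAt (fun t : ℝ => (y1 + y2) / (t - y1))
      ((0 * (x2 - y1) - (y1 + y2) * 1) / (x2 - y1)^2) x2 :=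
    ((hasDerivAt_const x2 (y1 + y2)).div ((hasDerivAt_id x2).sub_const y1) hxy)
  rw [show pdx 1 tu (x1, x2, y1, y2) = deriv (fun t : ℝ => (y1 + y2) / (t - y1)) x2 from rfl,
    hd.deriv]
  ring

lemma pdy_tu_0 {x1 x2 y1 y2 : ℝ} (hxy : x2 - y1 ≠ 0) :
    pdy 0 tu (x1, x2, y1, y2) = (x2 + y2) / (x2 - y1)^2 := by
  have hd : HasDerivAt (fun t : ℝ => (t + y2) / (x2 - t))
      ((1 * (x2 - y1) - (y1 + y2) * (-1)) / (x2 - y1)^2) y1 :=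
    (((hasDerivAt_id y1).add_const y2).div ((hasDerivAt_id y1).const_sub x2) hxy)
  rw [show pdy 0 tu (x1, x2, y1, y2) = deriv (fun t : ℝ => (t + y2) / (x2 - t)) y1 from rfl,
    hd.deriv]
  field_simp
  ring

lemma pdy_tu_1 (x1 x2 y1 y2 : ℝ) :
    pdy 1 tu (x1, x2, y1, y2) = 1 / (x2 - y1) := by
  have hd : HasDerivAt (fun t : ℝ => (y1 + t) / (x2 - y1)) (1 / (x2 - y1)) y2 :=
    ((hasDerivAt_id y2).const_add y1).div_const (x2 - y1)
  rw [show pdy 1 tu (x1, x2, y1, y2) = deriv (fun t : ℝ => (y1 + t) / (x2 - y1)) y2 from rfl,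
    hd.deriv]

lemma pdx_neg (m : Fin 2) (F : Pt → ℝ) (p : Pt) :
    pdx m (fun q => -F q) p = -(pdx m F p) := by
  unfold pdx
  split <;> simp [deriv.neg]

lemma pdy_neg (m : Fin 2) (F : Pt → ℝ) (p : Pt) :
    pdy m (fun q => -F q) p = -(pdy m F p) := by
  unfold pdy
  split <;> simp [deriv.neg]

lemma pdx_zero (m : Fin 2) (p : Pt) :
    pdx m (fun _ => (0:ℝ)) p = 0 := by
  unfold pdx
  split <;> simp

lemma pdy_zero (m : Fin 2) (p : Pt) :
    pdy m (fun _ => (0:ℝ)) p = 0 := by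
  unfold pdy
  split <;> simp

-- Stage 5b: pdx/pdy of Gam equals pdx/pdy of G
lemma pdx_Gam {x1 x2 y1 y2 : ℝ} (h1 : x1 + x2 ≠ 0) (h2 : y1 + y2 ≠ 0) (h3 : x2 ≠ y1)
    (m i j k : Fin 2) :
    pdx m (Gam w i j k) (x1, x2, y1, y2) = pdx m (G i j k) (x1, x2, y1, y2) := by
  fin_cases m
  · show deriv (fun t => Gam w i j k (t, x2, y1, y2)) x1
      = deriv (fun t => G i j k (t, x2, y1, y2)) x1
    apply Filter.EventuallyEq.deriv_eq
    filter_upwards [((continuous_id.add continuous_const).continuousAt).eventually_ne h1] with t ht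
    exact Gam_eq ht h2 h3 i j k
  · show deriv (fun t => Gam w i j k (x1, t, y1, y2)) x2
      = deriv (fun t => G i j k (x1, t, y1, y2)) x2
    apply Filter.EventuallyEq.deriv_eq
    filter_upwards [((continuous_const.add continuous_id).continuousAt).eventually_ne h1,
      continuousAt_id.eventually_ne h3] with t ht ht'
    exact Gam_eq ht h2 ht' i j k

lemma pdy_Gam {x1 x2 y1 y2 : ℝ} (h1 : x1 + x2 ≠ 0) (h2 : y1 + y2 ≠ 0) (h3 : x2 ≠ y1)
    (m i j k : Fin 2) :
    pdy m (Gam w i j k) (x1, x2, y1, y2) = pdy m (G i j k) (x1, x2, y1, y2) := by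
  fin_cases m
  · show deriv (fun t => Gam w i j k (x1, x2, t, y2)) y1
      = deriv (fun t => G i j k (x1, x2, t, y2)) y1
    apply Filter.EventuallyEq.deriv_eq
    filter_upwards [((continuous_id.add continuous_const).continuousAt).eventually_ne h2,
      continuousAt_id.eventually_ne (Ne.symm h3)] with t ht ht'
    exact Gam_eq h1 ht (Ne.symm ht') i j k
  · show deriv (fun t => Gam w i j k (x1, x2, y1, t)) y2
      = deriv (fun t => G i j k (x1, x2, y1, t)) y2
    apply Filter.EventuallyEq.deriv_eq
    filter_upwards [((continuous_const.add continuous_id).continuousAt).eventually_ne h2] with t ht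
    exact Gam_eq h1 ht h3 i j k

set_option maxHeartbeats 2000000 in
theorem stmt_10 (x1 x2 y1 y2 : ℝ) (h1 : x1 + x2 ≠ 0) (h2 : y1 + y2 ≠ 0)
    (h3 : x2 ≠ y1) :
    IsUnit (fbar w (x1, x2, y1, y2)) ∧
    IsUnit (ftil w (x1, x2, y1, y2)) ∧
    Gam w 0 0 0 (x1, x2, y1, y2) = (x1 + x2) / (x2 - y1) ∧
    Gam w 0 1 0 (x1, x2, y1, y2) = (y1 + y2) / (x2 - y1) ∧
    Gam w 1 1 0 (x1, x2, y1, y2) = -((x1 + x2) / (x2 - y1)) ∧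
    Gam w 1 1 1 (x1, x2, y1, y2) = -((y1 + y2) / (x2 - y1)) ∧
    Gam w 0 0 1 (x1, x2, y1, y2) = 0 ∧
    Gam w 0 1 1 (x1, x2, y1, y2) = 0 ∧
    Gam w 1 0 0 (x1, x2, y1, y2) = 0 ∧
    Gam w 1 0 1 (x1, x2, y1, y2) = 0 ∧
    (∀ i j k l : Fin 2, curv w i j k l (x1, x2, y1, y2) = 0) := by
  have hxy : x2 - y1 ≠ 0 := sub_ne_zero.mpr h3
  have hyx : y1 - x2 ≠ 0 := sub_ne_zero.mpr (Ne.symm h3)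
  refine ⟨fbar_w_unit h1 h2 h3, ftil_w_unit h1 h2 h3, ?_, ?_, ?_, ?_, ?_, ?_, ?_, ?_, ?_⟩
  · rw [Gam_eq h1 h2 h3]; simp [G, sg, tu]
  · rw [Gam_eq h1 h2 h3]; simp [G, sg, tu]
  · rw [Gam_eq h1 h2 h3]; simp [G, sg, tu]
  · rw [Gam_eq h1 h2 h3]; simp [G, sg, tu]
  · rw [Gam_eq h1 h2 h3]; simp [G, sg, tu]
  · rw [Gam_eq h1 h2 h3]; simp [G, sg, tu]
  · rw [Gam_eq h1 h2 h3]; simp [G, sg, tu]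
  · rw [Gam_eq h1 h2 h3]; simp [G, sg, tu]
  · intro i j k l
    fin_cases i <;> fin_cases j <;> fin_cases k <;> fin_cases l <;>
      · simp only [Fin.zero_eta, Fin.mk_one]
        simp only [curv, tors, Fin.sum_univ_two, pdx_Gam h1 h2 h3, pdy_Gam h1 h2 h3,
          Gam_eq h1 h2 h3, fbar_w_inv h1 h2 h3, ftil_w_inv h1 h2 h3]
        simp only [G, Matrix.cons_val', Matrix.cons_val_zero, Matrix.cons_val_one,
          Matrix.head_cons, Matrix.empty_val', Matrix.cons_val_fin_one, Matrix.head_fin_const,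
          Matrix.of_apply]
        simp only [pdx_neg, pdy_neg, pdx_zero, pdy_zero, pdx_sg_0, pdx_sg_1 hxy, pdy_sg_0 hxy,
          pdy_sg_1, pdx_tu_0, pdx_tu_1 hxy, pdy_tu_0 hxy, pdy_tu_1]
        simp only [sg, tu]
        field_simp
        try ring
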